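/- Let σ > 0 and C(s) = 2·s·arsinh(s/2) − 2·√(s² + 4) + 4. Then for every real j and all a, b ≥ σ one has |a·C(j/a) − b·C(j/b)| ≤ (2·|j|/σ)·|a − b|. -/

import Mathlib

/-- The Legendre conjugate of `C*(ζ) = 4 cosh(ζ/2) - 4`. -/
noncomputable def Cfun (s : ℝ) : ℝ :=
  2 * s * Real.arsinh (s / 2) - 2 * Real.sqrt (s ^ 2 + 4) + 4

noncomputable def gfun (j a : ℝ) : ℝ :=
  2 * j * Real.arsinh (j / (2 * a)) - 2 * Real.sqrt (j ^ 2 + 4 * a ^ 2) + 4 * a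

lemma gfun_eq (j a : ℝ) (ha : 0 < a) : gfun j a = a * Cfun (j / a) := by
  unfold gfun Cfun
  have h1 : j / a / 2 = j / (2 * a) := by rw [div_div, mul_comm a 2]
  have h2 : a * Real.sqrt ((j / a) ^ 2 + 4) = Real.sqrt (j ^ 2 + 4 * a ^ 2) := by
    rw [← Real.sqrt_sq ha.le, ← Real.sqrt_mul (sq_nonneg a)]
    congr 1
    field_simp
    rw [Real.sq_sqrt (sq_nonneg a)]
  have h3 : a * (j / a) = j := mul_div_cancel₀ j ha.ne'
  rw [h1]
  calc 2 * j * Real.arsinh (j / (2 * a)) - 2 * Real.sqrt (j ^ 2 + 4 * a ^ 2) + 4 * a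
      = 2 * (a * (j / a)) * Real.arsinh (j / (2 * a))
        - 2 * (a * Real.sqrt ((j / a) ^ 2 + 4)) + 4 * a := by rw [h2, h3]
    _ = a * (2 * (j / a) * Real.arsinh (j / (2 * a)) - 2 * Real.sqrt ((j / a) ^ 2 + 4) + 4) := by
        ring

lemma gfun_deriv (j a : ℝ) (ha : 0 < a) :
    HasDerivAt (gfun j) (4 - 2 * Real.sqrt (j ^ 2 + 4 * a ^ 2) / a) a := by
  have hS : (0:ℝ) < j ^ 2 + 4 * a ^ 2 := by positivity
  have hsq : 0 < Real.sqrt (j ^ 2 + 4 * a ^ 2) := Real.sqrt_pos.mpr hS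
  have hu : HasDerivAt (fun x : ℝ => j / (2 * x)) (j / 2 * (-(a ^ 2)⁻¹)) a := by
    have h := (hasDerivAt_inv ha.ne').const_mul (j / 2)
    have e1 : (fun x : ℝ => j / 2 * x⁻¹) = fun x : ℝ => j / (2 * x) := by
      funext x; ring
    rwa [e1] at h
  have harsinh : HasDerivAt (fun x : ℝ => Real.arsinh (j / (2 * x)))
      ((Real.sqrt (1 + (j / (2 * a)) ^ 2))⁻¹ * (j / 2 * (-(a ^ 2)⁻¹))) a :=
    (Real.hasDerivAt_arsinh _).comp a hu
  have hin : HasDerivAt (fun x : ℝ => j ^ 2 + 4 * x ^ 2) (8 * a) a := by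
    have h := ((hasDerivAt_pow 2 a).const_mul (4:ℝ)).const_add (j ^ 2)
    refine h.congr_deriv ?_
    simp; ring
  have hsqrt : HasDerivAt (fun x : ℝ => Real.sqrt (j ^ 2 + 4 * x ^ 2))
      (1 / (2 * Real.sqrt (j ^ 2 + 4 * a ^ 2)) * (8 * a)) a := by
    have h := (Real.hasDerivAt_sqrt hS.ne').comp a hin
    exact h
  have key : Real.sqrt (1 + (j / (2 * a)) ^ 2) = Real.sqrt (j ^ 2 + 4 * a ^ 2) / (2 * a) := by
    rw [eq_div_iff (by positivity : (2:ℝ) * a ≠ 0), ← Real.sqrt_sq (by positivity : (0:ℝ) ≤ 2 * a),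
      ← Real.sqrt_mul (by positivity)]
    congr 1
    field_simp
    rw [Real.sq_sqrt (by positivity : (0:ℝ) ≤ 2 ^ 2 * a ^ 2)]
    ring
  have hss : Real.sqrt (j ^ 2 + 4 * a ^ 2) * Real.sqrt (j ^ 2 + 4 * a ^ 2) = j ^ 2 + 4 * a ^ 2 :=
    Real.mul_self_sqrt hS.le
  have h := (((harsinh.const_mul (2 * j)).sub (hsqrt.const_mul 2)).add
    ((hasDerivAt_id a).const_mul 4))
  have hfun : (fun x : ℝ => 2 * j * Real.arsinh (j / (2 * x))
      - 2 * Real.sqrt (j ^ 2 + 4 * x ^ 2) + 4 * id x) = gfun j := by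
    funext x; simp [gfun]
  rw [← hfun]
  refine h.congr_deriv ?_
  rw [key]
  field_simp
  linear_combination 2 * hss

lemma deriv_bound (σ j a : ℝ) (hσ : 0 < σ) (ha : σ ≤ a) :
    |4 - 2 * Real.sqrt (j ^ 2 + 4 * a ^ 2) / a| ≤ 2 * |j| / σ := by
  have ha0 : 0 < a := hσ.trans_le ha
  have h1 : 2 * a ≤ Real.sqrt (j ^ 2 + 4 * a ^ 2) := by
    rw [show (2*a) = Real.sqrt ((2*a)^2) from (Real.sqrt_sq (by positivity)).symm]
    apply Real.sqrt_le_sqrt; nlinarith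
  have h2 : Real.sqrt (j ^ 2 + 4 * a ^ 2) ≤ |j| + 2 * a := by
    rw [show |j| + 2*a = Real.sqrt ((|j|+2*a)^2) from
      (Real.sqrt_sq (by positivity)).symm]
    apply Real.sqrt_le_sqrt; nlinarith [abs_nonneg j, sq_abs j]
  have hle : 4 - 2 * Real.sqrt (j ^ 2 + 4 * a ^ 2) / a ≤ 0 := by
    have : 4 ≤ 2 * Real.sqrt (j ^ 2 + 4 * a ^ 2) / a := by
      rw [le_div_iff₀ ha0]; nlinarith
    linarith
  rw [abs_of_nonpos hle, neg_sub, sub_le_iff_le_add, div_le_iff₀ ha0]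
  have hms : 2 * |j| / σ * σ = 2 * |j| := div_mul_cancel₀ _ hσ.ne'
  have hmono : 2 * |j| / σ * σ ≤ 2 * |j| / σ * a :=
    mul_le_mul_of_nonneg_left ha (by positivity)
  nlinarith [h2, abs_nonneg j]


theorem perspective_lipschitz (σ : ℝ) (hσ : 0 < σ) (j a b : ℝ) (ha : σ ≤ a) (hb : σ ≤ b) :
    |a * Cfun (j / a) - b * Cfun (j / b)| ≤ 2 * |j| / σ * |a - b| := by
  have key : ∀ x ∈ Set.Ici σ, HasDerivWithinAt (gfun j)
      (4 - 2 * Real.sqrt (j ^ 2 + 4 * x ^ 2) / x) (Set.Ici σ) x := fun x hx =>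
    (gfun_deriv j x (hσ.trans_le hx)).hasDerivWithinAt
  have bound : ∀ x ∈ Set.Ici σ, ‖4 - 2 * Real.sqrt (j ^ 2 + 4 * x ^ 2) / x‖ ≤ 2 * |j| / σ :=
    fun x hx => deriv_bound σ j x hσ hx
  have h := (convex_Ici σ).norm_image_sub_le_of_norm_hasDerivWithin_le key bound hb ha
  rw [← gfun_eq j a (hσ.trans_le ha), ← gfun_eq j b (hσ.trans_le hb)]
  simpa [Real.norm_eq_abs] using h
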